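/- (Cluster selection in ℝ^d.) For every dimension d ≥ 1 there exists a constant C > 0 (depending only on d) such that for every real ε with 0 < ε ≤ 1/2, every closed ball B₀ = closedBall(c₀, r₀) in Euclidean space ℝ^d with r₀ > 0, and every finite family of closed balls closedBall(c i, r i) (indexed by a finite type L, with r i > 0) each of which intersects B₀, there exists a subfamily L' of the family L together with B₀ of size |L'| ≤ C · ε^{-3d} such that for every ball B among the balls of L together with B₀, there exists a ball closedBall(c', r') ∈ L' whose radius r' is at least the radius of B and such that B ⊆ closedBall(c', (1+ε)·r'). -/

import Mathlib

open MeasureTheory Metric Finset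

lemma greedy_net' {ι : Type*} [DecidableEq ι] {X : Type*} [PseudoMetricSpace X]
    (p : ι → X) (r : ι → ℝ) {δ : ℝ} (hδ : 0 ≤ δ) (t : Finset ι) :
    ∃ s ⊆ t,
      (∀ i ∈ t, ∃ j ∈ s, dist (p i) (p j) ≤ δ ∧ r i ≤ r j) ∧
      (∀ j ∈ s, ∀ k ∈ s, j ≠ k → δ < dist (p j) (p k)) := by
  induction t using Finset.strongInduction with
  | _ t ih =>
    rcases t.eq_empty_or_nonempty with rfl | ht
    · exact ⟨∅, Finset.Subset.refl _, by simp, by simp⟩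
    obtain ⟨j, hj, hjmax⟩ := t.exists_max_image r ht
    have hss : t.filter (fun i => δ < dist (p i) (p j)) ⊂ t :=
      Finset.filter_ssubset.2 ⟨j, hj, by simp [dist_self, not_lt.2 hδ]⟩
    obtain ⟨s, hst, hcov, hsep⟩ := ih _ hss
    have hst' : s ⊆ t := hst.trans (Finset.filter_subset _ _)
    refine ⟨insert j s, Finset.insert_subset hj hst', ?_, ?_⟩
    · intro i hi
      by_cases h : δ < dist (p i) (p j)
      · obtain ⟨k, hk, h1, h2⟩ := hcov i (Finset.mem_filter.2 ⟨hi, h⟩)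
        exact ⟨k, Finset.mem_insert_of_mem hk, h1, h2⟩
      · exact ⟨j, Finset.mem_insert_self _ _, not_lt.1 h, hjmax i hi⟩
    · intro a ha b hb hab
      rcases Finset.mem_insert.1 ha with rfl | ha'
      · rcases Finset.mem_insert.1 hb with rfl | hb'
        · exact absurd rfl hab
        · have := (Finset.mem_filter.1 (hst hb')).2
          rwa [dist_comm] at this
      · rcases Finset.mem_insert.1 hb with rfl | hb'
        · exact (Finset.mem_filter.1 (hst ha')).2
        · exact hsep a ha' b hb' hab

lemma packing_bound' {d : ℕ} {ι : Type*} (s : Finset ι)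
    (p : ι → EuclideanSpace ℝ (Fin d)) (x : EuclideanSpace ℝ (Fin d))
    {δ Rg : ℝ} (hδ : 0 < δ) (hRg : 0 ≤ Rg)
    (hmem : ∀ j ∈ s, dist (p j) x ≤ Rg)
    (hsep : ∀ j ∈ s, ∀ k ∈ s, j ≠ k → δ < dist (p j) (p k)) :
    (s.card : ℝ) ≤ ((2 * Rg + δ) / δ) ^ d := by
  set μ := (volume : Measure (EuclideanSpace ℝ (Fin d)))
  set V := μ (closedBall (0 : EuclideanSpace ℝ (Fin d)) 1) with hV
  have hV0 : V ≠ 0 := (measure_closedBall_pos μ _ one_pos).ne'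
  have hVtop : V ≠ ⊤ := measure_closedBall_lt_top.ne
  have hball : ∀ y : EuclideanSpace ℝ (Fin d), ∀ {ρ : ℝ}, 0 ≤ ρ →
      μ (closedBall y ρ) = ENNReal.ofReal (ρ ^ d) * V := by
    intro y ρ hρ
    rw [Measure.addHaar_closedBall' μ y hρ, finrank_euclideanSpace_fin]
  have hdisj : (↑s : Set ι).PairwiseDisjoint (fun j => closedBall (p j) (δ / 2)) := by
    intro a ha b hb hab
    exact closedBall_disjoint_closedBall (by linarith [hsep a ha b hb hab])
  have h1 : μ (⋃ j ∈ s, closedBall (p j) (δ / 2)) = ∑ j ∈ s, μ (closedBall (p j) (δ / 2)) :=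
    measure_biUnion_finset hdisj fun _ _ => measurableSet_closedBall
  have h2 : μ (⋃ j ∈ s, closedBall (p j) (δ / 2)) ≤ μ (closedBall x (Rg + δ / 2)) := by
    apply measure_mono
    refine Set.iUnion₂_subset fun j hj => closedBall_subset_closedBall' ?_
    linarith [hmem j hj]
  have h3 : (s.card : ENNReal) * (ENNReal.ofReal ((δ / 2) ^ d) * V)
      ≤ ENNReal.ofReal ((Rg + δ / 2) ^ d) * V := by
    have e1 : ∑ j ∈ s, μ (closedBall (p j) (δ / 2))
        = (s.card : ENNReal) * (ENNReal.ofReal ((δ / 2) ^ d) * V) := by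
      rw [Finset.sum_congr rfl fun j hj => hball (p j) (by linarith : (0:ℝ) ≤ δ / 2)]
      rw [Finset.sum_const, nsmul_eq_mul]
    rw [← e1, ← h1, ← hball x (by linarith)]
    exact h2
  have h4 : (s.card : ENNReal) * ENNReal.ofReal ((δ / 2) ^ d)
      ≤ ENNReal.ofReal ((Rg + δ / 2) ^ d) := by
    rw [← mul_assoc] at h3
    exact (ENNReal.mul_le_mul_iff_left hV0 hVtop).1 h3
  have h5 : (s.card : ℝ) * (δ / 2) ^ d ≤ (Rg + δ / 2) ^ d := by
    have h4' : ENNReal.ofReal ((s.card : ℝ) * (δ / 2) ^ d)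
        ≤ ENNReal.ofReal ((Rg + δ / 2) ^ d) := by
      rw [ENNReal.ofReal_mul (by positivity), ENNReal.ofReal_natCast]
      exact h4
    exact (ENNReal.ofReal_le_ofReal_iff (by positivity)).1 h4'
  have hpow : (0:ℝ) < (δ / 2) ^ d := by positivity
  have key : ((2 * Rg + δ) / δ : ℝ) = (Rg + δ / 2) / (δ / 2) := by
    field_simp
  rw [key, div_pow]
  exact (le_div_iff₀ hpow).2 h5

set_option maxHeartbeats 1000000

/-- Cluster selection in `ℝ^d`: for every dimension `d ≥ 1` there is a
constant `C > 0` (depending only on `d`) such that for every `0 < ε ≤ 1/2`, every closed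
ball `B₀ = closedBall(c₀, r₀)` in `ℝ^d` and every finite family of closed balls intersecting
`B₀`, there is a subfamily of the family together with `B₀` (indexed by `Option L`, where
`none` stands for `B₀`) of size at most `C · ε^(-3d)`, such that every ball of the family
together with `B₀` is contained in a `(1+ε)`-expansion of some ball of the subfamily of at
least its radius. -/
theorem euclidean_cluster_selection (d : ℕ) (hd : 1 ≤ d) :
    ∃ C : ℝ, 0 < C ∧
      ∀ (ε : ℝ), 0 < ε → ε ≤ 1/2 →
      ∀ (c₀ : EuclideanSpace ℝ (Fin d)) (r₀ : ℝ), 0 < r₀ →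
      ∀ (L : Type) [Fintype L],
      ∀ (c : L → EuclideanSpace ℝ (Fin d)) (r : L → ℝ),
      (∀ i, 0 < r i) →
      (∀ i, (Metric.closedBall (c i) (r i) ∩ Metric.closedBall c₀ r₀).Nonempty) →
      -- centers and radii of the family together with `B₀`
      ∀ (C' : Option L → EuclideanSpace ℝ (Fin d)) (R : Option L → ℝ),
      C' none = c₀ → R none = r₀ → (∀ i : L, C' (some i) = c i) → (∀ i : L, R (some i) = r i) →
      ∃ L' : Finset (Option L),
        (L'.card : ℝ) ≤ C * ε ^ (-(3 * (d : ℤ))) ∧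
        ∀ o : Option L, ∃ m ∈ L', R o ≤ R m ∧
          Metric.closedBall (C' o) (R o) ⊆ Metric.closedBall (C' m) ((1 + ε) * R m) := by
  classical
  refine ⟨(41:ℝ) ^ d + 1, by positivity, ?_⟩
  intro ε hε hε2 c₀ r₀ hr₀ L _ c r hr hint C' R hC0 hR0 hCs hRs
  have hε1 : ε ≤ 1 := by linarith
  have hRpos : ∀ o : Option L, 0 < R o := by
    intro o; cases o with
    | none => rw [hR0]; exact hr₀
    | some i => rw [hRs]; exact hr i
  have hdist : ∀ o : Option L, dist (C' o) c₀ ≤ R o + r₀ := by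
    intro o; cases o with
    | none => rw [hC0, dist_self, hR0]; linarith
    | some i =>
      rw [hCs, hRs]
      obtain ⟨x, hx1, hx2⟩ := hint i
      have h1 : dist x (c i) ≤ r i := hx1
      have h2 : dist x c₀ ≤ r₀ := hx2
      calc dist (c i) c₀ ≤ dist (c i) x + dist x c₀ := dist_triangle _ _ _
        _ ≤ r i + r₀ := by rw [dist_comm (c i) x]; linarith
  obtain ⟨m₀, hm₀u, hm₀⟩ :=
    Finset.exists_max_image (Finset.univ : Finset (Option L)) R ⟨none, Finset.mem_univ _⟩
  set M := R m₀ with hM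
  have hMpos : 0 < M := hRpos m₀
  have hr₀M : r₀ ≤ M := by rw [← hR0]; exact hm₀ none (Finset.mem_univ _)
  have hcube : ε ^ 3 ≤ 1 := by
    calc ε ^ 3 ≤ ε ^ 0 := pow_le_pow_of_le_one hε.le hε1 (Nat.zero_le 3)
      _ = 1 := pow_zero ε
  have hQ1 : (1:ℝ) ≤ (ε ^ 3)⁻¹ := (one_le_inv₀ (by positivity)).2 hcube
  have hzp : ε ^ (-(3 * (d : ℤ))) = ((ε ^ 3)⁻¹) ^ d := by
    rw [inv_pow, ← pow_mul, zpow_neg, ← zpow_natCast ε (3 * d)]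
    norm_num
  suffices h : ∃ L' : Finset (Option L), (L'.card : ℝ) ≤ (41 / ε ^ 3) ^ d + 1 ∧
      ∀ o : Option L, ∃ m ∈ L', R o ≤ R m ∧
        Metric.closedBall (C' o) (R o) ⊆ Metric.closedBall (C' m) ((1 + ε) * R m) by
    obtain ⟨L', h1, h2⟩ := h
    refine ⟨L', ?_, h2⟩
    rw [hzp]
    have e : (41 / ε ^ 3 : ℝ) ^ d = 41 ^ d * ((ε ^ 3)⁻¹) ^ d := by
      rw [div_eq_mul_inv, mul_pow]
    have hp1 : (1:ℝ) ≤ ((ε ^ 3)⁻¹) ^ d := by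
      calc (1:ℝ) = 1 ^ d := (one_pow d).symm
        _ ≤ _ := pow_le_pow_left₀ zero_le_one hQ1 d
    calc (L'.card : ℝ) ≤ 41 ^ d * ((ε ^ 3)⁻¹) ^ d + 1 := by rw [← e]; exact h1
      _ ≤ 41 ^ d * ((ε ^ 3)⁻¹) ^ d + 1 * ((ε ^ 3)⁻¹) ^ d := by nlinarith
      _ = ((41:ℝ) ^ d + 1) * ((ε ^ 3)⁻¹) ^ d := by ring
  have hee5 : ε ^ 5 ≤ ε ^ 2 := pow_le_pow_of_le_one hε.le hε1 (by norm_num)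
  have hee3 : ε ^ 3 ≤ ε ^ 2 := pow_le_pow_of_le_one hε.le hε1 (by norm_num)
  by_cases hcase : ε * M ≤ 4 * r₀
  · -- Case A: all radii are at most 4 r₀ / ε
    set δ := ε ^ 2 * r₀ / 4 with hδ
    have hδpos : 0 < δ := by positivity
    set T := Finset.univ.filter (fun o : Option L => ε * r₀ / 2 < R o) with hT
    obtain ⟨s, hsT, hcov, hsep⟩ := greedy_net' C' R hδpos.le T
    have hpack : (s.card : ℝ) ≤ ((2 * (M + r₀) + δ) / δ) ^ d := by
      refine packing_bound' s C' c₀ hδpos (by positivity) ?_ hsep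
      intro j hj
      have h1 := hdist j
      have h2 : R j ≤ M := hm₀ j (Finset.mem_univ _)
      linarith
    have hbase : (2 * (M + r₀) + δ) / δ ≤ 41 / ε ^ 3 := by
      rw [div_le_div_iff₀ hδpos (by positivity), hδ]
      nlinarith [mul_le_mul_of_nonneg_left hcase (sq_nonneg ε),
        mul_le_mul_of_nonneg_right hee5 hr₀.le, mul_le_mul_of_nonneg_right hee3 hr₀.le]
    have hscard : (s.card : ℝ) ≤ (41 / ε ^ 3) ^ d :=
      hpack.trans (pow_le_pow_left₀ (by positivity) hbase d)
    refine ⟨insert none s, ?_, ?_⟩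
    · have hci : (insert none s).card ≤ s.card + 1 := Finset.card_insert_le _ _
      have : ((insert none s).card : ℝ) ≤ (s.card : ℝ) + 1 := by exact_mod_cast hci
      linarith
    · intro o
      by_cases ho : ε * r₀ / 2 < R o
      · obtain ⟨j, hjs, hd1, hd2⟩ := hcov o (Finset.mem_filter.2 ⟨Finset.mem_univ _, ho⟩)
        have hj' : ε * r₀ / 2 < R j := (Finset.mem_filter.1 (hsT hjs)).2
        refine ⟨j, Finset.mem_insert_of_mem hjs, hd2, Metric.closedBall_subset_closedBall' ?_⟩
        have hmul : ε * (ε * r₀ / 2) < ε * R j := mul_lt_mul_of_pos_left hj' hε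
        rw [hδ] at hd1
        nlinarith
      · push_neg at ho
        refine ⟨none, Finset.mem_insert_self _ _, ?_, ?_⟩
        · rw [hR0]; nlinarith
        · refine Metric.closedBall_subset_closedBall' ?_
          rw [hC0, hR0]
          have := hdist o
          nlinarith
  · -- Case B: there is a very large ball
    push_neg at hcase
    set δ := ε ^ 2 * M / 4 with hδ
    have hδpos : 0 < δ := by positivity
    have hr₀small : r₀ < ε * M / 4 := by linarith
    set T := Finset.univ.filter (fun o : Option L => ε * M / 2 - r₀ < R o) with hT
    obtain ⟨s, hsT, hcov, hsep⟩ := greedy_net' C' R hδpos.le T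
    have hpack : (s.card : ℝ) ≤ ((2 * (M + r₀) + δ) / δ) ^ d := by
      refine packing_bound' s C' c₀ hδpos (by positivity) ?_ hsep
      intro j hj
      have h1 := hdist j
      have h2 : R j ≤ M := hm₀ j (Finset.mem_univ _)
      linarith
    have hbase : (2 * (M + r₀) + δ) / δ ≤ 41 / ε ^ 3 := by
      rw [div_le_div_iff₀ hδpos (by positivity), hδ]
      nlinarith [mul_le_mul_of_nonneg_right hee5 hMpos.le,
        mul_le_mul_of_nonneg_right hee3 hMpos.le]
    have hscard : (s.card : ℝ) ≤ (41 / ε ^ 3) ^ d :=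
      hpack.trans (pow_le_pow_left₀ (by positivity) hbase d)
    refine ⟨insert m₀ s, ?_, ?_⟩
    · have hci : (insert m₀ s).card ≤ s.card + 1 := Finset.card_insert_le _ _
      have : ((insert m₀ s).card : ℝ) ≤ (s.card : ℝ) + 1 := by exact_mod_cast hci
      linarith
    · intro o
      by_cases ho : ε * M / 2 - r₀ < R o
      · obtain ⟨j, hjs, hd1, hd2⟩ := hcov o (Finset.mem_filter.2 ⟨Finset.mem_univ _, ho⟩)
        have hj' : ε * M / 2 - r₀ < R j := (Finset.mem_filter.1 (hsT hjs)).2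
        refine ⟨j, Finset.mem_insert_of_mem hjs, hd2, Metric.closedBall_subset_closedBall' ?_⟩
        have hj4 : ε * M / 4 < R j := by linarith
        have hmul : ε * (ε * M / 4) < ε * R j := mul_lt_mul_of_pos_left hj4 hε
        rw [hδ] at hd1
        nlinarith
      · push_neg at ho
        refine ⟨m₀, Finset.mem_insert_self _ _, hm₀ o (Finset.mem_univ _),
          Metric.closedBall_subset_closedBall' ?_⟩
        have h1 := hdist o
        have h2 := hdist m₀
        calc R o + dist (C' o) (C' m₀)
            ≤ R o + (dist (C' o) c₀ + dist (C' m₀) c₀) := by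
              rw [dist_comm (C' m₀) c₀]
              linarith [dist_triangle (C' o) c₀ (C' m₀)]
          _ ≤ (1 + ε) * R m₀ := by rw [← hM]; nlinarith
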